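/- Assume n is even, n ≥ 2, and a^2 ≠ c^2. Then for every nonzero periodic point X₀ of f and every integer i with 1 ≤ i ≤ e+1, the number of Y ∈ F_{q^2} that hang at depth i from X₀ equals 𝔤(n^i) − 𝔤(n^{i−1}). -/

import Mathlib

/-- `n` even, `n ≥ 2`, `a² ≠ c²`. For every nonzero periodic point `X₀`
and every `1 ≤ i ≤ e+1`, the number of `Y` hanging at depth `i` from `X₀` equals
`𝔤(nⁱ) - 𝔤(n^{i-1})`. -/
theorem stmt_11 (p m q : ℕ) (hp : p.Prime) (hpodd : p ≠ 2) (hm : 0 < m) (hq : q = p ^ m)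
    (F : Type*) [Field F] [Fintype F] (hF : Fintype.card F = q ^ 2)
    (a c : F) (ha : a ^ q = a) (hc : c ^ q = c)
    (n : ℕ) (hn2 : 2 ≤ n) (hneven : Even n)
    (hac : a ^ 2 ≠ c ^ 2)
    (f : F → F) (hf : ∀ X, f X = (c * X ^ q + a * X) * (X ^ q - X) ^ (n - 1))
    (r s : ℕ) (hrdvd : r ∣ q - 1) (hrcop : Nat.Coprime r n)
    (hrmax : ∀ r' : ℕ, r' ∣ q - 1 → Nat.Coprime r' n → r' ≤ r)
    (hsr : q - 1 = s * r)
    (e : ℕ) (he : Nat.gcd (n ^ e) (q - 1) < s)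
    (hemax : ∀ e' : ℕ, Nat.gcd (n ^ e') (q - 1) < s → e' ≤ e)
    (Periodic : F → Prop) (hPer : ∀ X : F, Periodic X ↔ ∃ k : ℕ, 1 ≤ k ∧ f^[k] X = X)
    (Hangs : ℕ → F → F → Prop)
    (hHangs : ∀ (k : ℕ) (Y X₀ : F),
      Hangs k Y X₀ ↔ f^[k] Y = X₀ ∧ ∀ i : ℕ, i < k → ¬ Periodic (f^[i] Y)) :
    ∀ X₀ : F, X₀ ≠ 0 → Periodic X₀ →
      ∀ i : ℕ, 1 ≤ i → i ≤ e + 1 →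
        ({Y : F | Hangs i Y X₀}.ncard : ℤ) =
          (Nat.gcd (n ^ i) (q - 1) : ℤ) - Nat.gcd (n ^ (i - 1)) (q - 1) := by
  classical
  -- basic numerics
  have hp3 : 3 ≤ p := by
    have := hp.two_le; omega
  have hq3 : 3 ≤ q := by
    calc 3 ≤ p := hp3
    _ ≤ p ^ m := Nat.le_self_pow (by omega) p
    _ = q := hq.symm
  have hqne : q ≠ 0 := by omega
  -- characteristic
  haveI hcharp : CharP F p := by
    obtain ⟨p', hp'⟩ := CharP.exists F
    haveI := hp'
    obtain ⟨n', hp'prime, hcard⟩ := FiniteField.card F p'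
    have hdvd : p ∣ p' ^ (n' : ℕ) := by
      rw [← hcard, hF, hq, ← pow_mul]
      exact dvd_pow_self p (by positivity)
    have hpp' : p = p' :=
      (Nat.prime_dvd_prime_iff_eq hp hp'prime).mp (hp.dvd_of_dvd_pow hdvd)
    rwa [hpp']
  haveI : Fact p.Prime := ⟨hp⟩
  have htwo : (2 : F) ≠ 0 := by
    have h2 : ((2 : ℕ) : F) ≠ 0 := by
      rw [Ne, CharP.cast_eq_zero_iff F p]
      intro hdvd
      have := Nat.le_of_dvd (by norm_num) hdvd
      omega
    simpa using h2
  -- Frobenius facts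
  have hqadd : ∀ x y : F, (x + y) ^ q = x ^ q + y ^ q := by
    intro x y; rw [hq]; exact add_pow_char_pow x y p m
  have hqsub : ∀ x y : F, (x - y) ^ q = x ^ q - y ^ q := by
    intro x y; rw [hq]; exact sub_pow_char_pow x y m
  have hq2 : ∀ x : F, (x ^ q) ^ q = x := by
    intro x
    rw [← pow_mul, ← sq]
    rw [← hF]
    exact FiniteField.pow_card x
  have husign : ∀ Y : F, (Y ^ q - Y) ^ q = -(Y ^ q - Y) := by
    intro Y
    rw [hqsub, hq2]
    ring
  -- n = k + 1 with k odd
  obtain ⟨k, hk⟩ : ∃ k, n = k + 1 := ⟨n - 1, by omega⟩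
  have hk1 : 1 ≤ k := by omega
  have hkodd : Odd k := by
    rcases hneven with ⟨t, ht⟩
    exact ⟨t - 1, by omega⟩
  have hf' : ∀ X, f X = (c * X ^ q + a * X) * (X ^ q - X) ^ k := by
    intro X
    rw [hf]
    congr 2
    omega
  -- nonvanishing of a ± c
  have hac1 : a + c ≠ 0 := by
    intro h
    apply hac
    have hca : c = -a := by linear_combination h
    rw [hca]; ring
  have hac2 : c - a ≠ 0 := by
    intro h
    apply hac
    have hca : c = a := by linear_combination h
    rw [hca]
  -- zero is absorbing
  have hf0 : f 0 = 0 := by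
    rw [hf']
    rw [zero_pow hqne]
    ring
  have hfit0 : ∀ j : ℕ, f^[j] (0 : F) = 0 := by
    intro j
    induction j with
    | zero => simp
    | succ j ih => rw [Function.iterate_succ_apply, hf0, ih]
  have hffix : ∀ Y : F, Y ^ q = Y → f Y = 0 := by
    intro Y h
    rw [hf', h, sub_self, zero_pow (by omega : k ≠ 0), mul_zero]
  -- conjugate of f Y
  have hconj : ∀ Y : F, (f Y) ^ q = -((c * Y + a * Y ^ q) * (Y ^ q - Y) ^ k) := by
    intro Y
    rw [hf', mul_pow]
    have h1 : (c * Y ^ q + a * Y) ^ q = c * Y + a * Y ^ q := by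
      rw [hqadd, mul_pow, mul_pow, hq2, ha, hc]
    have h2 : ((Y ^ q - Y) ^ k) ^ q = -((Y ^ q - Y) ^ k) := by
      rw [pow_right_comm, husign, hkodd.neg_pow]
    rw [h1, h2]
    ring
  -- scaling lemma
  have hscale : ∀ ζ Y : F, ζ ^ q = ζ → f (ζ * Y) = ζ ^ n * f Y := by
    intro ζ Y hζ
    have h1 : (ζ * Y) ^ q = ζ * Y ^ q := by rw [mul_pow, hζ]
    rw [hf', hf', h1, hk]
    have h2 : ζ * Y ^ q - ζ * Y = ζ * (Y ^ q - Y) := by ring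
    rw [h2, mul_pow]
    ring
  have hscalen : ∀ (j : ℕ) (ζ Y : F), ζ ^ q = ζ → f^[j] (ζ * Y) = ζ ^ n ^ j * f^[j] Y := by
    intro j
    induction j with
    | zero => intro ζ Y hζ; simp
    | succ j ih =>
      intro ζ Y hζ
      rw [Function.iterate_succ_apply, Function.iterate_succ_apply, hscale ζ Y hζ,
        ih (ζ ^ n) (f Y) (by rw [← pow_right_comm, hζ]), ← pow_mul, ← pow_succ']
  -- key injectivity-up-to-roots lemma at level 1
  have hstar : ∀ Y₁ Y₂ ζ' : F, ζ' ^ q = ζ' → ζ' ≠ 0 → Y₂ ^ q ≠ Y₂ → f Y₁ = ζ' * f Y₂ →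
      ∃ ζ : F, ζ ^ q = ζ ∧ ζ ^ n = ζ' ∧ Y₁ = ζ * Y₂ := by
    intro Y₁ Y₂ ζ' hζ'q hζ'0 hY2 hEq
    have hu2 : Y₂ ^ q - Y₂ ≠ 0 := sub_ne_zero.mpr hY2
    have E1 : (c * Y₁ ^ q + a * Y₁) * (Y₁ ^ q - Y₁) ^ k
        = ζ' * ((c * Y₂ ^ q + a * Y₂) * (Y₂ ^ q - Y₂) ^ k) := by
      rw [← hf', ← hf']; exact hEq
    have E2 : (c * Y₁ + a * Y₁ ^ q) * (Y₁ ^ q - Y₁) ^ k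
        = ζ' * ((c * Y₂ + a * Y₂ ^ q) * (Y₂ ^ q - Y₂) ^ k) := by
      have h := congrArg (· ^ q) hEq
      simp only [mul_pow, hζ'q, hconj] at h
      linear_combination -h
    have hdiff : (Y₁ ^ q - Y₁) ^ (k + 1) = ζ' * (Y₂ ^ q - Y₂) ^ (k + 1) := by
      have h3 : (c - a) * (Y₁ ^ q - Y₁) ^ (k + 1)
          = (c - a) * (ζ' * (Y₂ ^ q - Y₂) ^ (k + 1)) := by
        rw [pow_succ, pow_succ]
        linear_combination E1 - E2
      exact mul_left_cancel₀ hac2 h3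
    have hu1 : Y₁ ^ q - Y₁ ≠ 0 := by
      intro h0
      rw [h0, zero_pow (by omega : k + 1 ≠ 0)] at hdiff
      exact (mul_ne_zero hζ'0 (pow_ne_zero _ hu2)) hdiff.symm
    set ζ : F := (Y₁ ^ q - Y₁) * (Y₂ ^ q - Y₂)⁻¹ with hζdef
    have hζ0 : ζ ≠ 0 := mul_ne_zero hu1 (inv_ne_zero hu2)
    have hζq : ζ ^ q = ζ := by
      rw [hζdef, mul_pow, inv_pow, husign, husign, inv_neg]
      ring
    have hu12 : Y₁ ^ q - Y₁ = ζ * (Y₂ ^ q - Y₂) := by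
      rw [hζdef]
      field_simp
    have hζn : ζ ^ n = ζ' := by
      have : ζ ^ (k + 1) * (Y₂ ^ q - Y₂) ^ (k + 1) = ζ' * (Y₂ ^ q - Y₂) ^ (k + 1) := by
        rw [← mul_pow, ← hu12]
        exact hdiff
      rw [hk]
      exact mul_right_cancel₀ (pow_ne_zero _ hu2) this
    have hζn' : ζ ^ (k + 1) = ζ' := by rw [← hk]; exact hζn
    have hsum : (Y₁ ^ q + Y₁) = ζ * (Y₂ ^ q + Y₂) := by
      have h4 : (a + c) * (Y₁ ^ q + Y₁) * (Y₁ ^ q - Y₁) ^ k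
          = ζ' * ((a + c) * (Y₂ ^ q + Y₂) * (Y₂ ^ q - Y₂) ^ k) := by
        linear_combination E1 + E2
      have hpow : (Y₁ ^ q - Y₁) ^ k = ζ ^ k * (Y₂ ^ q - Y₂) ^ k := by
        rw [hu12, mul_pow]
      have h5 : ((a + c) * ((Y₂ ^ q - Y₂) ^ k * ζ ^ k)) * (Y₁ ^ q + Y₁)
          = ((a + c) * ((Y₂ ^ q - Y₂) ^ k * ζ ^ k)) * (ζ * (Y₂ ^ q + Y₂)) := by
        calc ((a + c) * ((Y₂ ^ q - Y₂) ^ k * ζ ^ k)) * (Y₁ ^ q + Y₁)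
            = (a + c) * (Y₁ ^ q + Y₁) * (Y₁ ^ q - Y₁) ^ k := by rw [hpow]; ring
          _ = ζ' * ((a + c) * (Y₂ ^ q + Y₂) * (Y₂ ^ q - Y₂) ^ k) := h4
          _ = ζ ^ (k + 1) * ((a + c) * (Y₂ ^ q + Y₂) * (Y₂ ^ q - Y₂) ^ k) := by rw [hζn']
          _ = ((a + c) * ((Y₂ ^ q - Y₂) ^ k * ζ ^ k)) * (ζ * (Y₂ ^ q + Y₂)) := by
              rw [pow_succ]; ring
      exact mul_left_cancel₀
        (mul_ne_zero hac1 (mul_ne_zero (pow_ne_zero _ hu2) (pow_ne_zero _ hζ0))) h5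
    refine ⟨ζ, hζq, hζn, ?_⟩
    have h2Y : (2 : F) * Y₁ = 2 * (ζ * Y₂) := by linear_combination hsum - hu12
    exact mul_left_cancel₀ htwo h2Y
  -- injectivity-up-to-roots for iterates
  have hinj : ∀ (j : ℕ) (Y₁ Y₂ ζ' : F), ζ' ^ q = ζ' → ζ' ≠ 0 → f^[j] Y₂ ≠ 0 →
      f^[j] Y₁ = ζ' * f^[j] Y₂ → ∃ ζ : F, ζ ^ q = ζ ∧ ζ ^ n ^ j = ζ' ∧ Y₁ = ζ * Y₂ := by
    intro j
    induction j with
    | zero =>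
      intro Y₁ Y₂ ζ' hζ'q hζ'0 _ hEq
      exact ⟨ζ', hζ'q, by simpa using rfl, by simpa using hEq⟩
    | succ j ih =>
      intro Y₁ Y₂ ζ' hζ'q hζ'0 hne hEq
      rw [Function.iterate_succ_apply, Function.iterate_succ_apply] at hEq
      rw [Function.iterate_succ_apply] at hne
      obtain ⟨ζ₁, hζ₁q, hζ₁pow, hfeq⟩ := ih (f Y₁) (f Y₂) ζ' hζ'q hζ'0 hne hEq
      have hζ₁0 : ζ₁ ≠ 0 := by
        intro h
        rw [h, zero_pow (by positivity : n ^ j ≠ 0)] at hζ₁pow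
        exact hζ'0 hζ₁pow.symm
      have hY2 : Y₂ ^ q ≠ Y₂ := by
        intro h
        rw [hffix Y₂ h, hfit0 j] at hne
        exact hne rfl
      obtain ⟨ζ, hζq, hζn, hY⟩ := hstar Y₁ Y₂ ζ₁ hζ₁q hζ₁0 hY2 hfeq
      refine ⟨ζ, hζq, ?_, hY⟩
      rw [pow_succ', pow_mul, hζn, hζ₁pow]
  -- periodicity basics
  have hPerIterEq : ∀ (X : F) (t : ℕ), f^[t] X = X → ∀ j : ℕ, f^[t * j] X = X := by
    intro X t ht j
    induction j with
    | zero => simp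
    | succ j ih =>
      rw [Nat.mul_succ, Function.iterate_add_apply, ht, ih]
  have hPerIter : ∀ X : F, Periodic X → ∀ j : ℕ, Periodic (f^[j] X) := by
    intro X hX j
    obtain ⟨t, ht1, htX⟩ := (hPer X).mp hX
    refine (hPer _).mpr ⟨t, ht1, ?_⟩
    rw [← Function.iterate_add_apply, Nat.add_comm, Function.iterate_add_apply, htX]
  have hPerPre : ∀ X : F, Periodic X → ∃ P : F, Periodic P ∧ f P = X ∧ (X ≠ 0 → P ≠ 0) := by
    intro X hX
    obtain ⟨t, ht1, htX⟩ := (hPer X).mp hX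
    refine ⟨f^[t - 1] X, hPerIter X hX (t - 1), ?_, ?_⟩
    · have h := Function.iterate_succ_apply' f (t - 1) X
      rw [show (t - 1).succ = t from by omega] at h
      rw [← h, htX]
    · intro hX0 hP0
      apply hX0
      rw [← htX]
      have : t = 1 + (t - 1) := by omega
      rw [this, Function.iterate_add_apply, hP0]
      simpa using hfit0 1
  have hPerInjAt : ∀ P P' : F, Periodic P → Periodic P' → f P = f P' → P = P' := by
    intro P P' hPp hPp' hfeq
    obtain ⟨t, ht1, htP⟩ := (hPer P).mp hPp
    obtain ⟨t', ht1', htP'⟩ := (hPer P').mp hPp'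
    have h1 : f^[t * t'] P = P := hPerIterEq P t htP t'
    have h2 : f^[t * t'] P' = P' := by
      have := hPerIterEq P' t' htP' t
      rwa [Nat.mul_comm] at this
    have hNpos : 1 ≤ t * t' := Nat.one_le_iff_ne_zero.mpr (by positivity)
    set N := t * t' - 1 with hNdef
    have hN : t * t' = N + 1 := by omega
    rw [hN] at h1 h2
    calc P = f^[N + 1] P := h1.symm
      _ = f^[N] (f P) := Function.iterate_succ_apply f N P
      _ = f^[N] (f P') := by rw [hfeq]
      _ = f^[N + 1] P' := (Function.iterate_succ_apply f N P').symm
      _ = P' := h2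
  -- the fiber counting lemma
  have hfib : ∀ Z : F, Z ≠ 0 → Periodic Z → ∀ j : ℕ,
      {Y : F | f^[j] Y = Z}.ncard = Nat.gcd (n ^ j) (q - 1) := by
    intro Z hZ0 hPZ j
    obtain ⟨t, ht1, htZ⟩ := (hPer Z).mp hPZ
    set W : F := f^[t * j - j] Z with hWdef
    have hjtj : j ≤ t * j := Nat.le_mul_of_pos_left j (by omega)
    have hW : f^[j] W = Z := by
      rw [hWdef, ← Function.iterate_add_apply]
      have : j + (t * j - j) = t * j := by omega
      rw [this]
      exact hPerIterEq Z t htZ j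
    have hW0 : W ≠ 0 := by
      intro h
      apply hZ0
      rw [← hW, h]
      exact hfit0 j
    have hfW : f^[j] W ≠ 0 := by rw [hW]; exact hZ0
    -- fiber = image of roots of unity
    have hg : {Y : F | f^[j] Y = Z} = (fun ζ : F => ζ * W) '' {ζ : F | ζ ^ q = ζ ∧ ζ ^ n ^ j = 1} := by
      ext Y
      simp only [Set.mem_setOf_eq, Set.mem_image]
      constructor
      · intro hY
        obtain ⟨ζ, h1, h2, h3⟩ := hinj j Y W 1 (one_pow q) one_ne_zero hfW
          (by rw [hY, hW, one_mul])
        exact ⟨ζ, ⟨h1, h2⟩, h3.symm⟩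
      · rintro ⟨ζ, ⟨h1, h2⟩, rfl⟩
        rw [hscalen j ζ W h1, h2, one_mul, hW]
    rw [hg, Set.ncard_image_of_injOn (fun x _ y _ hxy => mul_right_cancel₀ hW0 hxy)]
    -- count the roots of unity
    set g := Nat.gcd (n ^ j) (q - 1) with hgdef
    have hgpos : 0 < g := Nat.gcd_pos_of_pos_left _ (by positivity)
    have hgdvd1 : g ∣ n ^ j := Nat.gcd_dvd_left _ _
    have hgdvd2 : g ∣ q - 1 := Nat.gcd_dvd_right _ _
    have hμ : {ζ : F | ζ ^ q = ζ ∧ ζ ^ n ^ j = 1} = ↑(Polynomial.nthRootsFinset g (1 : F)) := by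
      ext ζ
      simp only [Set.mem_setOf_eq, Finset.mem_coe, Polynomial.mem_nthRootsFinset hgpos (1 : F)]
      constructor
      · rintro ⟨h1, h2⟩
        have hζ0 : ζ ≠ 0 := by
          intro h
          rw [h, zero_pow (by positivity : n ^ j ≠ 0)] at h2
          exact zero_ne_one h2
        have hq1 : ζ ^ (q - 1) = 1 := by
          have hstep : ζ ^ (q - 1) * ζ = 1 * ζ := by
            rw [one_mul, ← pow_succ]
            have : q - 1 + 1 = q := by omega
            rw [this, h1]
          exact mul_right_cancel₀ hζ0 hstep
        have h5 : orderOf ζ ∣ g :=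
          Nat.dvd_gcd (orderOf_dvd_of_pow_eq_one h2) (orderOf_dvd_of_pow_eq_one hq1)
        exact orderOf_dvd_iff_pow_eq_one.mp h5
      · intro hζg
        obtain ⟨d1, hd1⟩ := hgdvd1
        obtain ⟨d2, hd2⟩ := hgdvd2
        have h3 : ζ ^ n ^ j = 1 := by rw [hd1, pow_mul, hζg, one_pow]
        have h4 : ζ ^ (q - 1) = 1 := by rw [hd2, pow_mul, hζg, one_pow]
        refine ⟨?_, h3⟩
        have : q = (q - 1) + 1 := by omega
        rw [this, pow_succ, h4, one_mul]
    rw [hμ, Set.ncard_coe_finset]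
    -- primitive root of order g
    have hq21 : 9 ≤ q ^ 2 := by
      have : 3 * 3 ≤ q * q := Nat.mul_le_mul hq3 hq3
      rw [sq]; omega
    have hdvdcard : g ∣ q ^ 2 - 1 := by
      refine hgdvd2.trans ⟨q + 1, ?_⟩
      have := Nat.sq_sub_sq q 1
      rw [one_pow] at this
      rw [this]
      ring
    obtain ⟨γ, hγ⟩ := IsCyclic.exists_generator (α := Fˣ)
    have hord : orderOf γ = q ^ 2 - 1 := by
      rw [orderOf_eq_card_of_forall_mem_zpowers hγ, Nat.card_eq_fintype_card,
        Fintype.card_units, hF]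
    have hordζ : orderOf (γ ^ ((q ^ 2 - 1) / g)) = g := by
      rw [orderOf_pow, hord]
      have ht : (q ^ 2 - 1) / g ∣ q ^ 2 - 1 := Nat.div_dvd_of_dvd hdvdcard
      rw [Nat.gcd_eq_right ht]
      exact Nat.div_div_self hdvdcard (by omega)
    have hprim : IsPrimitiveRoot ((γ ^ ((q ^ 2 - 1) / g) : Fˣ) : F) g := by
      have h := IsPrimitiveRoot.orderOf (γ ^ ((q ^ 2 - 1) / g))
      rw [hordζ] at h
      exact IsPrimitiveRoot.coe_units_iff.mpr h
    exact hprim.card_nthRootsFinset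
  -- main assembly
  intro X₀ hX0 hPerX0 i hi1 _
  obtain ⟨P₀, hPerP0, hfP0, hP0ne'⟩ := hPerPre X₀ hPerX0
  have hP0 : P₀ ≠ 0 := hP0ne' hX0
  have hiter : ∀ Y : F, f^[i] Y = f (f^[i - 1] Y) := by
    intro Y
    have h := Function.iterate_succ_apply' f (i - 1) Y
    rw [show (i - 1).succ = i from by omega] at h
    exact h
  have hsplit : {Y : F | f^[i] Y = X₀}
      = {Y : F | Hangs i Y X₀} ∪ {Y : F | f^[i - 1] Y = P₀} := by
    ext Y
    simp only [Set.mem_setOf_eq, Set.mem_union, hHangs]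
    constructor
    · intro hY
      by_cases hper : Periodic (f^[i - 1] Y)
      · right
        apply hPerInjAt _ _ hper hPerP0
        rw [hfP0, ← hiter Y, hY]
      · left
        refine ⟨hY, fun j hj hpj => hper ?_⟩
        have hrw : f^[i - 1] Y = f^[i - 1 - j] (f^[j] Y) := by
          rw [← Function.iterate_add_apply]
          congr 1
          omega
        rw [hrw]
        exact hPerIter _ hpj (i - 1 - j)
    · rintro (⟨h1, _⟩ | h2)
      · exact h1
      · rw [hiter Y, h2, hfP0]
  have hdisj : Disjoint {Y : F | Hangs i Y X₀} {Y : F | f^[i - 1] Y = P₀} := by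
    rw [Set.disjoint_left]
    intro Y hY1 hY2
    exact ((hHangs i Y X₀).mp hY1).2 (i - 1) (by omega) (by rw [Set.mem_setOf_eq] at hY2; rw [hY2]; exact hPerP0)
  have hcard : ({Y : F | f^[i] Y = X₀}).ncard
      = {Y : F | Hangs i Y X₀}.ncard + {Y : F | f^[i - 1] Y = P₀}.ncard := by
    rw [hsplit]
    exact Set.ncard_union_eq hdisj (Set.toFinite _) (Set.toFinite _)
  rw [hfib X₀ hX0 hPerX0 i, hfib P₀ hP0 hPerP0 (i - 1)] at hcard
  push_cast
  omega
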